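/- Let G be a finite 2-generated group containing a normal, non-abelian maximal subgroup M with Z(G) properly contained in Z(M), and let x ∈ M \ Z(M) and z ∈ Z(M) \ Z(G). If x and z lie in the same connected component of the non-commuting, non-generating graph nc(G), then the distance d(x,z) in nc(G) is at most 3. -/

import Mathlib

open Subgroup

namespace NC

variable {G : Type*} [Group G]

/-- The centre of a subgroup `H`, realised as a subgroup of the ambient group `G`. -/
def centerOf (H : Subgroup G) : Subgroup G := H ⊓ Subgroup.centralizer (H : Set G)

/-- `H` is a maximal subgroup of `K` (both subgroups of the ambient group `G`). -/
def IsMaximalIn (H K : Subgroup G) : Prop :=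
  H < K ∧ ∀ T : Subgroup G, H < T → T ≤ K → T = K

/-- The non-commuting, non-generating graph of `G`: vertices `x, y` are adjacent
iff they do not commute and do not generate `G`.  (Central elements are isolated
vertices here; the paper simply removes them from the vertex set.) -/
def ncGraph (G : Type*) [Group G] : SimpleGraph G where
  Adj x y := x * y ≠ y * x ∧ Subgroup.closure {x, y} ≠ ⊤
  symm := by
    constructor
    intro x y h
    exact ⟨fun e => h.1 e.symm, by rw [Set.pair_comm]; exact h.2⟩
  loopless := by
    constructor
    intro x h
    exact h.1 rfl

/-- The conjugate `g H g⁻¹` of a subgroup `H` by an element `g`. -/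
def conjSub (g : G) (H : Subgroup G) : Subgroup G := H.map (MulAut.conj g).toMonoidHom

/-- "The quotient of `G` by the subgroup `H` is cyclic": every coset of `H` is a
power of a fixed coset.  For `H` normal this says exactly that `G/H` is cyclic. -/
def QuotCyclic (H : Subgroup G) : Prop := ∃ g : G, ∀ x : G, ∃ n : ℤ, x⁻¹ * g ^ n ∈ H

/-- `P` is a Sylow `p`-subgroup of `G`. -/
def IsSylowIn (p : ℕ) (P : Subgroup G) : Prop :=
  IsPGroup p P ∧ ∀ R : Subgroup G, IsPGroup p R → P ≤ R → R = P

/-- The Frattini subgroup of a subgroup `P` (the intersection of the maximal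
subgroups of `P`), realised as a subgroup of the ambient group. -/
def phiIn (P : Subgroup G) : Subgroup G := P ⊓ sInf {W : Subgroup G | IsMaximalIn W P}

/-- `G` has exactly two conjugacy classes of maximal subgroups. -/
def TwoMaxClasses (G : Type*) [Group G] : Prop :=
  ∃ K L : Subgroup G, IsCoatom K ∧ IsCoatom L ∧ (∀ g : G, conjSub g K ≠ L) ∧
    ∀ T : Subgroup G, IsCoatom T → (∃ g : G, T = conjSub g K) ∨ (∃ g : G, T = conjSub g L)

/-- The induced subgraph of the non-commuting, non-generating graph on the
actual vertex set `G \ Z(G)`. -/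
def ncSubgraph (G : Type*) [Group G] := (ncGraph G).induce {x : G | x ∉ Subgroup.center G}

lemma union_trick {H A B : Subgroup G} (h : ∀ g ∈ H, g ∈ A ∨ g ∈ B) : H ≤ A ∨ H ≤ B := by
  by_contra hc
  push_neg at hc
  obtain ⟨h1, h2⟩ := hc
  rw [SetLike.le_def] at h1 h2
  push_neg at h1 h2
  obtain ⟨a, haH, haA⟩ := h1
  obtain ⟨b, hbH, hbB⟩ := h2
  have haB : a ∈ B := (h a haH).resolve_left haA
  have hbA : b ∈ A := (h b hbH).resolve_right hbB
  rcases h (a * b) (mul_mem haH hbH) with hab | hab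
  · exact haA (by simpa using mul_mem hab (inv_mem hbA))
  · exact hbB (by simpa using mul_mem (inv_mem haB) hab)

lemma compl_gen {L W C : Subgroup G} {k₀ : G} (hk₀L : k₀ ∈ L) (hk₀W : k₀ ∉ W)
    (h : ∀ k ∈ L, k ∉ W → k ∈ C) : L ≤ C := by
  intro k hk
  by_cases hkW : k ∈ W
  · have h1 : k * k₀ ∈ L := mul_mem hk hk₀L
    have h2 : k * k₀ ∉ W := by
      intro hm
      exact hk₀W (by simpa using mul_mem (inv_mem hkW) hm)
    have hc1 := h _ h1 h2
    have hc2 := h k₀ hk₀L hk₀W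
    have hk' : k = k * k₀ * k₀⁻¹ := by group
    rw [hk']
    exact mul_mem hc1 (inv_mem hc2)
  · exact h k hk hkW

lemma mem_centerOf {M : Subgroup G} {a : G} :
    a ∈ centerOf M ↔ a ∈ M ∧ ∀ m ∈ M, m * a = a * m := by
  rw [centerOf, Subgroup.mem_inf, Subgroup.mem_centralizer_iff]
  simp only [SetLike.mem_coe]

lemma centerOf_normal {M : Subgroup G} (hMn : M.Normal) : (centerOf M).Normal := by
  constructor
  intro ζ hζ g
  obtain ⟨hζM, hζC⟩ := mem_centerOf.mp hζ
  rw [mem_centerOf]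
  refine ⟨hMn.conj_mem ζ hζM g, ?_⟩
  intro m hm
  have hm' : g⁻¹ * m * g ∈ M := by
    have := hMn.conj_mem m hm g⁻¹
    simpa using this
  have hcomm := hζC _ hm'
  calc m * (g * ζ * g⁻¹) = g * (g⁻¹ * m * g * ζ) * g⁻¹ := by group
    _ = g * (ζ * (g⁻¹ * m * g)) * g⁻¹ := by rw [hcomm]
    _ = g * ζ * g⁻¹ * m := by group

lemma Zu_proper {M : Subgroup G} (hMn : M.Normal)
    (hMna : ∃ a ∈ M, ∃ b ∈ M, a * b ≠ b * a) (u : G) :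
    centerOf M ⊔ Subgroup.zpowers u ≠ ⊤ := by
  intro htop
  obtain ⟨a, haM, b, hbM, hab⟩ := hMna
  haveI : (centerOf M).Normal := centerOf_normal hMn
  have decomp : ∀ m : G, ∃ ζ ∈ centerOf M, ∃ k : ℤ, m = ζ * u ^ k := by
    intro m
    have hm : m ∈ ((centerOf M ⊔ Subgroup.zpowers u : Subgroup G) : Set G) := by
      rw [htop]; trivial
    rw [Subgroup.normal_mul] at hm
    obtain ⟨ζ, hζ, w, hw, rfl⟩ := hm
    obtain ⟨k, rfl⟩ := Subgroup.mem_zpowers_iff.mp hw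
    exact ⟨ζ, hζ, k, rfl⟩
  obtain ⟨ζ₁, hζ₁, k₁, ha⟩ := decomp a
  obtain ⟨ζ₂, hζ₂, k₂, hb⟩ := decomp b
  obtain ⟨hζ₁M, hζ₁C⟩ := mem_centerOf.mp hζ₁
  obtain ⟨hζ₂M, hζ₂C⟩ := mem_centerOf.mp hζ₂
  have hu1 : u ^ k₁ ∈ M := by
    have h' : u ^ k₁ = ζ₁⁻¹ * a := by rw [ha]; group
    rw [h']; exact mul_mem (inv_mem hζ₁M) haM
  have hu2 : u ^ k₂ ∈ M := by
    have h' : u ^ k₂ = ζ₂⁻¹ * b := by rw [hb]; group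
    rw [h']; exact mul_mem (inv_mem hζ₂M) hbM
  have c12 : u ^ k₁ * ζ₂ = ζ₂ * u ^ k₁ := hζ₂C _ hu1
  have c21 : u ^ k₂ * ζ₁ = ζ₁ * u ^ k₂ := hζ₁C _ hu2
  have cζ : ζ₁ * ζ₂ = ζ₂ * ζ₁ := hζ₂C _ hζ₁M
  have cu : u ^ k₁ * u ^ k₂ = u ^ k₂ * u ^ k₁ := by
    rw [← zpow_add, ← zpow_add, add_comm]
  apply hab
  rw [ha, hb]
  calc ζ₁ * u ^ k₁ * (ζ₂ * u ^ k₂) = ζ₁ * (u ^ k₁ * ζ₂) * u ^ k₂ := by group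
    _ = ζ₁ * (ζ₂ * u ^ k₁) * u ^ k₂ := by rw [c12]
    _ = ζ₁ * ζ₂ * (u ^ k₁ * u ^ k₂) := by group
    _ = ζ₂ * ζ₁ * (u ^ k₂ * u ^ k₁) := by rw [cζ, cu]
    _ = ζ₂ * (ζ₁ * u ^ k₂) * u ^ k₁ := by group
    _ = ζ₂ * (u ^ k₂ * ζ₁) * u ^ k₁ := by rw [c21]
    _ = ζ₂ * u ^ k₂ * (ζ₁ * u ^ k₁) := by group

lemma cz {M : Subgroup G} (hM : IsCoatom M) {z' g : G} (hz' : z' ∈ centerOf M)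
    (hz'Z : z' ∉ Subgroup.center G) (hg : g ∉ M) : z' * g ≠ g * z' := by
  intro hcomm
  have hMC : M ≤ Subgroup.centralizer {z'} := by
    intro m hm
    rw [Subgroup.mem_centralizer_singleton_iff]
    exact (mem_centerOf.mp hz').2 m hm
  have hgC : g ∈ Subgroup.centralizer {z'} := by
    rw [Subgroup.mem_centralizer_singleton_iff]
    exact hcomm.symm
  have htop : Subgroup.centralizer {z'} = ⊤ :=
    hM.2 _ (lt_of_le_of_ne hMC (fun he => hg (he ▸ hgC)))
  apply hz'Z
  rw [Subgroup.mem_center_iff]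
  intro g'
  have hg' : g' ∈ Subgroup.centralizer {z'} := htop ▸ Subgroup.mem_top g'
  exact Subgroup.mem_centralizer_singleton_iff.mp hg'

lemma adj_z {M : Subgroup G} (hM : IsCoatom M) (hMn : M.Normal)
    (hMna : ∃ a ∈ M, ∃ b ∈ M, a * b ≠ b * a) {z : G} (hz : z ∈ centerOf M)
    (hzZ : z ∉ Subgroup.center G) {u : G} (hu : u ∉ M) : (ncGraph G).Adj u z := by
  constructor
  · intro h
    exact cz hM hz hzZ hu h.symm
  · intro h
    apply Zu_proper hMn hMna u
    rw [eq_top_iff, ← h]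
    refine (Subgroup.closure_le _).mpr ?_
    rw [Set.insert_subset_iff, Set.singleton_subset_iff]
    exact ⟨Subgroup.mem_sup_right (Subgroup.mem_zpowers u), Subgroup.mem_sup_left hz⟩

lemma conj_closure_top {a b : G} (g : G) (h : Subgroup.closure {a, b} = ⊤) :
    Subgroup.closure {g * a * g⁻¹, g * b * g⁻¹} = ⊤ := by
  rw [eq_top_iff']
  intro y
  have hy : g⁻¹ * y * g ∈ Subgroup.closure {a, b} := by rw [h]; trivial
  have main : ∀ w ∈ Subgroup.closure {a, b},
      g * w * g⁻¹ ∈ Subgroup.closure {g * a * g⁻¹, g * b * g⁻¹} := by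
    intro w hw
    induction hw using Subgroup.closure_induction with
    | mem t ht =>
      rcases ht with rfl | rfl
      · exact Subgroup.subset_closure (Set.mem_insert _ _)
      · exact Subgroup.subset_closure (Set.mem_insert_of_mem _ rfl)
    | one => simpa using one_mem _
    | mul s t hs ht ihs iht =>
      have he : g * (s * t) * g⁻¹ = (g * s * g⁻¹) * (g * t * g⁻¹) := by group
      rw [he]; exact mul_mem ihs iht
    | inv s hs ih =>
      have he : g * s⁻¹ * g⁻¹ = (g * s * g⁻¹)⁻¹ := by group
      rw [he]; exact inv_mem ih
  have h2 := main _ hy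
  have hyy : g * (g⁻¹ * y * g) * g⁻¹ = y := by group
  rwa [hyy] at h2

lemma comm_conj_iff (g a b : G) :
    (g * a * g⁻¹) * (g * b * g⁻¹) = (g * b * g⁻¹) * (g * a * g⁻¹) ↔ a * b = b * a := by
  constructor
  · intro h
    have h2 := congrArg (fun t => g⁻¹ * t * g) h
    simpa [mul_assoc] using h2
  · intro h
    have h2 := congrArg (fun t => g * t * g⁻¹) h
    simpa [mul_assoc] using h2

lemma lemma6 {M : Subgroup G} (hM : IsCoatom M) (hMn : M.Normal)
    {x z : G} (hx : x ∈ M) (hz : z ∈ centerOf M) (hzZ : z ∉ Subgroup.center G)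
    (hP2 : ∀ v u : G, (ncGraph G).Adj x v → u ∉ M → ¬ (ncGraph G).Adj v u)
    {L : Subgroup G} (hL : IsCoatom L) {u₁ : G} (hu₁L : u₁ ∈ L) (hu₁M : u₁ ∉ M) :
    ∀ g : G, ∀ w ∈ L, w ∈ M → (g * x * g⁻¹) * w = w * (g * x * g⁻¹) := by
  by_contra hcon
  push_neg at hcon
  obtain ⟨g₀, w₀, hw₀L, hw₀M, hne⟩ := hcon
  have stepA : ∀ u ∈ L, u ∉ M → ∀ v ∈ L, v ∈ M →
      (g₀ * x * g₀⁻¹) * v ≠ v * (g₀ * x * g₀⁻¹) → v * u = u * v := by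
    intro u huL huM v hvL hvM hvnc
    have hvv : g₀ * (g₀⁻¹ * v * g₀) * g₀⁻¹ = v := by group
    have huu : g₀ * (g₀⁻¹ * u * g₀) * g₀⁻¹ = u := by group
    have hv'M : g₀⁻¹ * v * g₀ ∈ M := by
      have := hMn.conj_mem v hvM g₀⁻¹
      simpa [mul_assoc] using this
    have hu'M : g₀⁻¹ * u * g₀ ∉ M := by
      intro hm
      apply huM
      have := hMn.conj_mem _ hm g₀
      rwa [huu] at this
    have hadj : (ncGraph G).Adj x (g₀⁻¹ * v * g₀) := by
      constructor
      · intro hcomm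
        apply hvnc
        have h2 := (comm_conj_iff g₀ x (g₀⁻¹ * v * g₀)).mpr hcomm
        rwa [hvv] at h2
      · intro hcl
        have hle : Subgroup.closure {x, g₀⁻¹ * v * g₀} ≤ M := by
          refine (Subgroup.closure_le _).mpr ?_
          rw [Set.insert_subset_iff, Set.singleton_subset_iff]
          exact ⟨hx, hv'M⟩
        exact hM.1 (top_unique (hcl ▸ hle))
    have hnadj := hP2 _ _ hadj hu'M
    have hvu' : (g₀⁻¹ * v * g₀) * (g₀⁻¹ * u * g₀) = (g₀⁻¹ * u * g₀) * (g₀⁻¹ * v * g₀) := by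
      by_contra hne'
      apply hnadj
      refine ⟨hne', ?_⟩
      intro hcl
      have h3 := conj_closure_top g₀ hcl
      rw [hvv, huu] at h3
      have hle : Subgroup.closure {v, u} ≤ L := by
        refine (Subgroup.closure_le _).mpr ?_
        rw [Set.insert_subset_iff, Set.singleton_subset_iff]
        exact ⟨hvL, huL⟩
      exact hL.1 (top_unique (h3 ▸ hle))
    have h4 := (comm_conj_iff g₀ (g₀⁻¹ * v * g₀) (g₀⁻¹ * u * g₀)).mpr hvu'
    rwa [hvv, huu] at h4
  have stepB : ∀ u ∈ L, u ∉ M → (L ⊓ M : Subgroup G) ≤ Subgroup.centralizer {u} := by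
    intro u huL huM
    have hcover : ∀ g' ∈ (L ⊓ M : Subgroup G),
        g' ∈ Subgroup.centralizer {g₀ * x * g₀⁻¹} ∨ g' ∈ Subgroup.centralizer {u} := by
      intro v hv
      obtain ⟨hvL, hvM⟩ := Subgroup.mem_inf.mp hv
      by_cases hc : (g₀ * x * g₀⁻¹) * v = v * (g₀ * x * g₀⁻¹)
      · left; rw [Subgroup.mem_centralizer_singleton_iff]; exact hc.symm
      · right; rw [Subgroup.mem_centralizer_singleton_iff]
        exact stepA u huL huM v hvL hvM hc
    rcases union_trick hcover with h | h
    · exfalso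
      have h5 := h (Subgroup.mem_inf.mpr ⟨hw₀L, hw₀M⟩)
      exact hne (Subgroup.mem_centralizer_singleton_iff.mp h5).symm
    · exact h
  have stepC : ∀ w ∈ L, w ∈ M → L ≤ Subgroup.centralizer {w} := by
    intro w hwL hwM
    apply compl_gen hu₁L hu₁M
    intro k hkL hkM
    rw [Subgroup.mem_centralizer_singleton_iff]
    have h6 := stepB k hkL hkM (Subgroup.mem_inf.mpr ⟨hwL, hwM⟩)
    exact (Subgroup.mem_centralizer_singleton_iff.mp h6).symm
  have hCw₀ : Subgroup.centralizer {w₀} = L := by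
    have hle : L ≤ Subgroup.centralizer {w₀} := stepC w₀ hw₀L hw₀M
    have hne' : Subgroup.centralizer {w₀} ≠ ⊤ := by
      intro htop
      apply hne
      have h7 : (g₀ * x * g₀⁻¹) ∈ Subgroup.centralizer {w₀} := htop ▸ Subgroup.mem_top _
      exact Subgroup.mem_centralizer_singleton_iff.mp h7
    by_contra hnee
    exact hne' (hL.2 _ (lt_of_le_of_ne hle (Ne.symm hnee)))
  have hzL : z ∈ L := by
    rw [← hCw₀, Subgroup.mem_centralizer_singleton_iff]
    exact ((mem_centerOf.mp hz).2 w₀ hw₀M).symm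
  have hzM : z ∈ M := (mem_centerOf.mp hz).1
  have h8 := stepB u₁ hu₁L hu₁M (Subgroup.mem_inf.mpr ⟨hzL, hzM⟩)
  have hcomm : z * u₁ = u₁ * z := Subgroup.mem_centralizer_singleton_iff.mp h8
  exact cz hM hz hzZ hu₁M hcomm

/-- Proposition 4.4(iv) / `prop:xzdist`. -/
theorem statement_13 [Finite G] (h2gen : ∃ a b : G, Subgroup.closure {a, b} = ⊤)
    {M : Subgroup G} (hM : IsCoatom M) (hMn : M.Normal)
    (hMna : ∃ a ∈ M, ∃ b ∈ M, a * b ≠ b * a)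
    (hZ : Subgroup.center G < centerOf M)
    {x z : G} (hx : x ∈ M) (hxZ : x ∉ centerOf M)
    (hz : z ∈ centerOf M) (hzZ : z ∉ Subgroup.center G)
    (hreach : (ncGraph G).Reachable x z) :
    (ncGraph G).dist x z ≤ 3 := by
  classical
  by_cases hC2 : ∃ u, u ∉ M ∧ (ncGraph G).Adj x u
  · obtain ⟨u, huM, hadj⟩ := hC2
    have hd := SimpleGraph.dist_le (SimpleGraph.Walk.cons hadj
        (SimpleGraph.Walk.cons (adj_z hM hMn hMna hz hzZ huM) SimpleGraph.Walk.nil))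
    simp only [SimpleGraph.Walk.length_cons, SimpleGraph.Walk.length_nil] at hd
    omega
  by_cases hC3 : ∃ v u, (ncGraph G).Adj x v ∧ u ∉ M ∧ (ncGraph G).Adj v u
  · obtain ⟨v, u, hxv, huM, hvu⟩ := hC3
    have hd := SimpleGraph.dist_le (SimpleGraph.Walk.cons hxv (SimpleGraph.Walk.cons hvu
        (SimpleGraph.Walk.cons (adj_z hM hMn hMna hz hzZ huM) SimpleGraph.Walk.nil)))
    simp only [SimpleGraph.Walk.length_cons, SimpleGraph.Walk.length_nil] at hd
    omega
  -- the "kernel" case: derive a contradiction with reachability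
  exfalso
  push_neg at hC2 hC3
  haveI : Finite (Subgroup G) := Finite.of_injective _ SetLike.coe_injective
  -- Step 4 : there is u₀ outside M not commuting with x
  obtain ⟨u₀, hu₀M, hu₀x⟩ : ∃ u₀, u₀ ∉ M ∧ x * u₀ ≠ u₀ * x := by
    by_contra hcc
    push_neg at hcc
    apply hxZ
    rw [mem_centerOf]
    refine ⟨hx, ?_⟩
    obtain ⟨t, ht⟩ : ∃ t, t ∉ M := by
      by_contra hmm; push_neg at hmm; exact hM.1 ((Subgroup.eq_top_iff' M).mpr hmm)
    have hall : (⊤ : Subgroup G) ≤ Subgroup.centralizer {x} := by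
      apply compl_gen (Subgroup.mem_top t) ht
      intro k _ hkM
      rw [Subgroup.mem_centralizer_singleton_iff]
      exact (hcc k hkM).symm
    intro m hm
    exact (Subgroup.mem_centralizer_singleton_iff.mp (hall (Subgroup.mem_top m)))
  have htop : Subgroup.closure {x, u₀} = ⊤ := by
    by_contra hne
    exact (hC2 u₀ hu₀M) ⟨hu₀x, hne⟩
  set X := Subgroup.normalClosure {x} with hX
  haveI : X.Normal := Subgroup.normalClosure_normal
  have hXM : X ≤ M := Subgroup.normalClosure_le_normal (by simpa using hx)
  have hXsup : X ⊔ Subgroup.zpowers u₀ = ⊤ := by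
    rw [eq_top_iff, ← htop]
    refine (Subgroup.closure_le _).mpr ?_
    rw [Set.insert_subset_iff, Set.singleton_subset_iff]
    exact ⟨Subgroup.mem_sup_left (Subgroup.subset_normalClosure (Set.mem_singleton x)),
      Subgroup.mem_sup_right (Subgroup.mem_zpowers u₀)⟩
  obtain ⟨L₀, hL₀, hL₀ge⟩ : ∃ L, IsCoatom L ∧ centerOf M ⊔ Subgroup.zpowers u₀ ≤ L := by
    rcases eq_top_or_exists_le_coatom (centerOf M ⊔ Subgroup.zpowers u₀) with h | h
    · exact absurd h (Zu_proper hMn hMna u₀)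
    · exact h
  have hu₀L₀ : u₀ ∈ L₀ := hL₀ge (Subgroup.mem_sup_right (Subgroup.mem_zpowers u₀))
  have hP2 : ∀ v u : G, (ncGraph G).Adj x v → u ∉ M → ¬ (ncGraph G).Adj v u := hC3
  -- decomposition of M
  have hdecomp : ∀ m ∈ M, ∃ ξ ∈ X, ∃ k : ℤ, m = ξ * u₀ ^ k ∧
      ∀ g : G, (g * x * g⁻¹) * (u₀ ^ k) = (u₀ ^ k) * (g * x * g⁻¹) := by
    intro m hm
    have hm' : m ∈ ((X ⊔ Subgroup.zpowers u₀ : Subgroup G) : Set G) := by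
      rw [hXsup]; trivial
    rw [Subgroup.normal_mul] at hm'
    obtain ⟨ξ, hξ, w, hw, rfl⟩ := hm'
    obtain ⟨k, rfl⟩ := Subgroup.mem_zpowers_iff.mp hw
    refine ⟨ξ, hξ, k, rfl, ?_⟩
    have hkM : u₀ ^ k ∈ M := by
      have he : u₀ ^ k = ξ⁻¹ * (ξ * u₀ ^ k) := by group
      rw [he]; exact mul_mem (inv_mem (hXM hξ)) hm
    have hkL : u₀ ^ k ∈ L₀ := zpow_mem hu₀L₀ k
    exact fun g => lemma6 hM hMn hx hz hzZ hP2 hL₀ hu₀L₀ hu₀M g (u₀ ^ k) hkL hkM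
  -- helper: elements commuting with all conjugates of x commute with X
  have hXc : ∀ c : G, (∀ g : G, (g * x * g⁻¹) * c = c * (g * x * g⁻¹)) →
      ∀ ξ ∈ X, ξ * c = c * ξ := by
    intro c hc ξ hξ
    have hXle : X ≤ Subgroup.centralizer {c} := by
      have hXdef : X = Subgroup.closure (Group.conjugatesOfSet {x}) := rfl
      rw [hXdef]
      refine (Subgroup.closure_le _).mpr ?_
      intro t ht
      obtain ⟨a, ha, hconj⟩ := Group.mem_conjugatesOfSet_iff.mp ht
      rw [Set.mem_singleton_iff] at ha; subst ha
      obtain ⟨g, rfl⟩ := isConj_iff.mp hconj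
      rw [SetLike.mem_coe, Subgroup.mem_centralizer_singleton_iff]
      exact hc g
    exact Subgroup.mem_centralizer_singleton_iff.mp (hXle hξ)
  -- Step 8
  have hstep8 : ∀ m ∈ M, (∀ g : G, (g * x * g⁻¹) * m = m * (g * x * g⁻¹)) →
      ∀ m' ∈ M, m * m' = m' * m := by
    intro m hm hmc m' hm'
    obtain ⟨ξ, hξ, k, hdm, hkc⟩ := hdecomp m hm
    obtain ⟨ξ', hξ', k', hdm', hkc'⟩ := hdecomp m' hm'
    have c1 : ξ' * m = m * ξ' := hXc m hmc ξ' hξ'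
    have c2 : m * u₀ ^ k' = u₀ ^ k' * m := by
      rw [hdm]
      have d1 : ξ * u₀ ^ k' = u₀ ^ k' * ξ := hXc (u₀ ^ k') hkc' ξ hξ
      have d2 : u₀ ^ k * u₀ ^ k' = u₀ ^ k' * u₀ ^ k := by
        rw [← zpow_add, ← zpow_add, add_comm]
      calc ξ * u₀ ^ k * u₀ ^ k' = ξ * (u₀ ^ k * u₀ ^ k') := by group
        _ = ξ * (u₀ ^ k' * u₀ ^ k) := by rw [d2]
        _ = (ξ * u₀ ^ k') * u₀ ^ k := by group
        _ = (u₀ ^ k' * ξ) * u₀ ^ k := by rw [d1]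
        _ = u₀ ^ k' * (ξ * u₀ ^ k) := by group
    rw [hdm']
    calc m * (ξ' * u₀ ^ k') = (m * ξ') * u₀ ^ k' := by group
      _ = (ξ' * m) * u₀ ^ k' := by rw [← c1]
      _ = ξ' * (m * u₀ ^ k') := by group
      _ = ξ' * (u₀ ^ k' * m) := by rw [c2]
      _ = (ξ' * u₀ ^ k') * m := by group
  -- Step 9 : any edge leaving M starts at an element central in M
  have hstep9 : ∀ m ∈ M, ∀ u : G, u ∉ M → (ncGraph G).Adj m u →
      ∀ m' ∈ M, m * m' = m' * m := by
    intro m hm u huM hadj m' hm'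
    obtain ⟨L, hL, hle⟩ : ∃ L, IsCoatom L ∧ Subgroup.closure {m, u} ≤ L := by
      rcases eq_top_or_exists_le_coatom (Subgroup.closure {m, u}) with h | h
      · exact absurd h hadj.2
      · exact h
    have hmL : m ∈ L := hle (Subgroup.subset_closure (Set.mem_insert _ _))
    have huL : u ∈ L := hle (Subgroup.subset_closure (Set.mem_insert_of_mem _ rfl))
    have hYp : ∀ g : G, (g * x * g⁻¹) * m = m * (g * x * g⁻¹) :=
      fun g => lemma6 hM hMn hx hz hzZ hP2 hL huL huM g m hmL hm
    exact hstep8 m hm hYp m' hm'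
  -- walk argument
  have hwalk : ∀ (a b : G) (p : (ncGraph G).Walk a b), a ∈ M →
      (∃ m' ∈ M, a * m' ≠ m' * a) → b ∈ centerOf M → False := by
    intro a b p
    induction p with
    | nil =>
      intro haM hwit hbZ
      obtain ⟨m', hm'M, hne⟩ := hwit
      exact hne ((mem_centerOf.mp hbZ).2 m' hm'M).symm
    | @cons a' b' c' h q ih =>
      intro haM hwit hbZ
      by_cases hbM : b' ∈ M
      · exact ih hbM ⟨a', haM, fun hcm => h.1 hcm.symm⟩ hbZ
      · obtain ⟨m', hm'M, hne⟩ := hwit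
        exact hne (hstep9 a' haM b' hbM h m' hm'M)
  obtain ⟨p⟩ := hreach
  apply hwalk x z p hx _ hz
  -- witness that x is non-central in M
  rw [mem_centerOf] at hxZ
  push_neg at hxZ
  obtain ⟨m', hm'M, hne⟩ := hxZ hx
  exact ⟨m', hm'M, fun hcm => hne hcm.symm⟩


end NC
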